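/- The 0-multiple-cover formula is stable under pointwise products: let f, g : ℕ≥1 → ℚ and define F(δ) = ∑_{k | δ} f(k)·T_k and G(δ) = ∑_{l | δ} g(l)·T_l in 𝒢. Then for every δ ≥ 1, F(δ)·G(δ) = ∑_{d | δ} h(d)·T_d, where h(d) = ∑_{k | d} ∑_{l | d, lcm(k,l) = d} f(k)·g(l). -/

import Mathlib

noncomputable section

/-- `G = (ℝ/ℤ)^r`. -/
abbrev Gr (r : ℕ) : Type := Fin r → AddCircle (1 : ℝ)

/-- The group algebra `𝒢 = ℚ[G]`. -/
abbrev GA (r : ℕ) : Type := AddMonoidAlgebra ℚ (Gr r)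

/-- `T_n := n^{-r} • ∑_{τ : n • τ = 0} (τ)`, the average of the `n`-torsion
elements of `G`. -/
noncomputable def Tor (r n : ℕ) : GA r :=
  ((n : ℚ) ^ r)⁻¹ • ∑ᶠ τ ∈ {τ : Gr r | n • τ = 0}, AddMonoidAlgebra.single τ (1 : ℚ)

open AddCircle in
lemma circle_torsion (n : ℕ) [NeZero n] :
    {x : AddCircle (1:ℝ) | n • x = 0} = Set.range (ZMod.toAddCircle (N := n)) := by
  ext x
  constructor
  · intro hx
    induction x using QuotientAddGroup.induction_on with
    | H y =>
      rw [Set.mem_setOf_eq, ← AddCircle.coe_nsmul, AddCircle.coe_eq_zero_iff] at hx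
      obtain ⟨m, hm⟩ := hx
      refine ⟨(m : ZMod n), ?_⟩
      rw [ZMod.toAddCircle_intCast]
      congr 1
      have hn : (n : ℝ) ≠ 0 := Nat.cast_ne_zero.mpr (NeZero.ne n)
      field_simp
      rw [mul_comm]
      simpa [nsmul_eq_mul, zsmul_eq_mul, mul_comm] using hm
  · rintro ⟨j, rfl⟩
    simp only [Set.mem_setOf_eq, ← map_nsmul]
    have : n • j = 0 := by
      rw [nsmul_eq_mul]; simp [ZMod.natCast_self]
    rw [this, map_zero]

def Sset (r n : ℕ) : Set (Gr r) := {τ | n • τ = 0}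

lemma Sset_eq (r n : ℕ) [NeZero n] :
    Sset r n = Set.range (fun (v : Fin r → ZMod n) i => ZMod.toAddCircle (v i)) := by
  ext τ
  simp only [Sset, Set.mem_setOf_eq, Set.mem_range]
  constructor
  · intro hτ
    have : ∀ i, τ i ∈ Set.range (ZMod.toAddCircle (N := n)) := by
      intro i
      rw [← circle_torsion]
      exact congrFun hτ i
    choose v hv using this
    exact ⟨v, funext hv⟩
  · rintro ⟨v, rfl⟩
    funext i
    have h : (n : ZMod n) = 0 := ZMod.natCast_self n
    simp only [Pi.smul_apply, Pi.zero_apply, ← map_nsmul, nsmul_eq_mul, h, zero_mul, map_zero]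

lemma Sset_finite (r n : ℕ) (hn : 0 < n) : (Sset r n).Finite := by
  haveI : NeZero n := ⟨hn.ne'⟩
  rw [Sset_eq]
  exact Set.finite_range _

lemma Sset_card (r n : ℕ) (hn : 0 < n) : (Sset_finite r n hn).toFinset.card = n ^ r := by
  haveI : NeZero n := ⟨hn.ne'⟩
  have hinj : Function.Injective (fun (v : Fin r → ZMod n) i => ZMod.toAddCircle (v i)) := by
    intro v w h
    funext i
    exact ZMod.toAddCircle_injective n (congrFun h i)
  rw [← Set.ncard_eq_toFinset_card _ (Sset_finite r n hn), Sset_eq, ← Set.image_univ,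
    Set.ncard_image_of_injective _ hinj, Set.ncard_univ]
  simp [Nat.card_eq_fintype_card, ZMod.card]

lemma mem_S {r n : ℕ} {hn : 0 < n} {τ : Gr r} :
    τ ∈ (Sset_finite r n hn).toFinset ↔ n • τ = 0 := by
  rw [Set.Finite.mem_toFinset]; exact Iff.rfl

lemma smul_zero_of_dvd {r : ℕ} {a b : ℕ} (h : a ∣ b) {τ : Gr r} (hτ : a • τ = 0) :
    b • τ = 0 := by
  obtain ⟨c, rfl⟩ := h
  rw [mul_comm, mul_smul, hτ, smul_zero]

lemma zsmul_zero_of_nsmul {r : ℕ} {a : ℕ} {τ : Gr r} (hτ : a • τ = 0) (z : ℤ) :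
    (z * a) • τ = 0 := by
  rw [mul_smul, natCast_zsmul, hτ, smul_zero]

lemma exists_decomp {r k l : ℕ} (hk : 0 < k) (hl : 0 < l) {ρ : Gr r}
    (hρ : Nat.lcm k l • ρ = 0) :
    ∃ τ σ : Gr r, k • τ = 0 ∧ l • σ = 0 ∧ τ + σ = ρ := by
  set g := Nat.gcd k l with hgdef
  have hg : 0 < g := Nat.gcd_pos_of_pos_left l hk
  have hco : Nat.Coprime (k / g) (l / g) := Nat.coprime_div_gcd_div_gcd hg
  have hco' : IsCoprime ((k / g : ℕ) : ℤ) ((l / g : ℕ) : ℤ) :=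
    Nat.isCoprime_iff_coprime.mpr hco
  obtain ⟨u, v, huv⟩ := hco'
  have hkl : k * (l / g) = Nat.lcm k l := by
    rw [← Nat.mul_div_assoc k (Nat.gcd_dvd_right k l), ← Nat.gcd_mul_lcm k l,
      Nat.mul_div_cancel_left _ hg]
  have hlk : l * (k / g) = Nat.lcm k l := by
    rw [← Nat.mul_div_assoc l (Nat.gcd_dvd_left k l), mul_comm l k, ← Nat.gcd_mul_lcm k l,
      Nat.mul_div_cancel_left _ hg]
  refine ⟨(v * (l / g : ℕ)) • ρ, (u * (k / g : ℕ)) • ρ, ?_, ?_, ?_⟩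
  · rw [← natCast_zsmul _ k, smul_smul]
    have : (k : ℤ) * (v * (l / g : ℕ)) = v * (Nat.lcm k l : ℕ) := by
      rw [← hkl]; push_cast; ring
    rw [this]
    exact zsmul_zero_of_nsmul hρ v
  · rw [← natCast_zsmul _ l, smul_smul]
    have : (l : ℤ) * (u * (k / g : ℕ)) = u * (Nat.lcm k l : ℕ) := by
      rw [← hlk]; push_cast; ring
    rw [this]
    exact zsmul_zero_of_nsmul hρ u
  · rw [← add_zsmul]
    have : v * (l / g : ℕ) + u * (k / g : ℕ) = 1 := by rw [add_comm]; exact huv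
    rw [this, one_zsmul]

lemma image_eq {r k l : ℕ} (hk : 0 < k) (hl : 0 < l) :
    ((Sset_finite r k hk).toFinset ×ˢ (Sset_finite r l hl).toFinset).image
        (fun p => p.1 + p.2) =
      (Sset_finite r (Nat.lcm k l) (Nat.lcm_pos hk hl)).toFinset := by
  ext ρ
  simp only [Finset.mem_image, Finset.mem_product]
  constructor
  · rintro ⟨⟨τ, σ⟩, ⟨hτ, hσ⟩, rfl⟩
    rw [mem_S (hn := hk)] at hτ
    rw [mem_S (hn := hl)] at hσ
    rw [mem_S (hn := Nat.lcm_pos hk hl)]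
    rw [smul_add, smul_zero_of_dvd (Nat.dvd_lcm_left k l) hτ,
      smul_zero_of_dvd (Nat.dvd_lcm_right k l) hσ, add_zero]
  · intro hρ
    rw [mem_S (hn := Nat.lcm_pos hk hl)] at hρ
    obtain ⟨τ, σ, hτ, hσ, hsum⟩ := exists_decomp hk hl hρ
    exact ⟨(τ, σ), ⟨(mem_S (hn := hk)).mpr hτ, (mem_S (hn := hl)).mpr hσ⟩, hsum⟩

lemma fiber_card {r k l : ℕ} (hk : 0 < k) (hl : 0 < l) {ρ : Gr r}
    (hρ : Nat.lcm k l • ρ = 0) :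
    (((Sset_finite r k hk).toFinset ×ˢ (Sset_finite r l hl).toFinset).filter
        (fun p => p.1 + p.2 = ρ)).card = Nat.gcd k l ^ r := by
  classical
  have hg : 0 < Nat.gcd k l := Nat.gcd_pos_of_pos_left l hk
  obtain ⟨τ₀, σ₀, hτ₀, hσ₀, hsum₀⟩ := exists_decomp hk hl hρ
  rw [← Sset_card r (Nat.gcd k l) hg]
  apply Finset.card_bij' (fun p _ => p.1 - τ₀) (fun ξ _ => (τ₀ + ξ, σ₀ - ξ))
  · rintro ⟨τ, σ⟩ hp
    simp only [Finset.mem_filter, Finset.mem_product] at hp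
    obtain ⟨⟨hτ, hσ⟩, hps⟩ := hp
    rw [mem_S (hn := hk)] at hτ
    rw [mem_S (hn := hl)] at hσ
    rw [mem_S (hn := hg)]
    have hb := Nat.gcd_eq_gcd_ab k l
    have hkτ : k • (τ - τ₀) = 0 := by rw [smul_sub, hτ, hτ₀, sub_zero]
    have hlτ : l • (τ - τ₀) = 0 := by
      have hττ : τ - τ₀ = σ₀ - σ := by
        rw [sub_eq_sub_iff_add_eq_add, hps, ← hsum₀, add_comm]
      rw [hττ, smul_sub, hσ, hσ₀, sub_zero]
    rw [← natCast_zsmul, hb, add_smul, mul_comm, mul_smul, natCast_zsmul, hkτ, smul_zero,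
      mul_comm, mul_smul, natCast_zsmul, hlτ, smul_zero, add_zero]
  · intro ξ hξ
    rw [mem_S (hn := hg)] at hξ
    simp only [Finset.mem_filter, Finset.mem_product]
    refine ⟨⟨?_, ?_⟩, ?_⟩
    · rw [mem_S (hn := hk), smul_add, hτ₀, zero_add]
      exact smul_zero_of_dvd (Nat.gcd_dvd_left k l) hξ
    · rw [mem_S (hn := hl), smul_sub, hσ₀, zero_sub,
        smul_zero_of_dvd (Nat.gcd_dvd_right k l) hξ, neg_zero]
    · show τ₀ + ξ + (σ₀ - ξ) = ρ
      rw [← hsum₀]; abel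
  · rintro ⟨τ, σ⟩ hp
    simp only [Finset.mem_filter, Finset.mem_product] at hp
    obtain ⟨⟨hτ, hσ⟩, hps⟩ := hp
    rw [mem_S (hn := hk)] at hτ
    rw [mem_S (hn := hl)] at hσ
    show (τ₀ + (τ - τ₀), σ₀ - (τ - τ₀)) = (τ, σ)
    have hττ : τ - τ₀ = σ₀ - σ := by
      rw [sub_eq_sub_iff_add_eq_add, hps, ← hsum₀, add_comm]
    rw [Prod.mk.injEq]
    constructor
    · abel
    · rw [hττ, sub_sub_cancel]
  · intro ξ _
    show τ₀ + ξ - τ₀ = ξ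
    abel

lemma Tor_eq (r n : ℕ) (hn : 0 < n) :
    Tor r n = ((n : ℚ) ^ r)⁻¹ •
      ∑ τ ∈ (Sset_finite r n hn).toFinset, AddMonoidAlgebra.single τ (1 : ℚ) := by
  rw [Tor, ← finsum_mem_coe_finset, Set.Finite.coe_toFinset]
  rfl

lemma Tor_mul (r : ℕ) (k l : ℕ) (hk : 0 < k) (hl : 0 < l) :
    Tor r k * Tor r l = Tor r (Nat.lcm k l) := by
  classical
  have hm : 0 < Nat.lcm k l := Nat.lcm_pos hk hl
  have hg : 0 < Nat.gcd k l := Nat.gcd_pos_of_pos_left l hk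
  rw [Tor_eq r k hk, Tor_eq r l hl, Tor_eq r _ hm, smul_mul_smul_comm,
    Finset.sum_mul_sum]
  simp only [AddMonoidAlgebra.single_mul_single, mul_one]
  rw [← Finset.sum_product'
    (f := fun τ σ : Gr r => (AddMonoidAlgebra.single (τ + σ) (1:ℚ) : AddMonoidAlgebra ℚ (Gr r)))]
  rw [Finset.sum_comp (fun ρ => (AddMonoidAlgebra.single ρ (1:ℚ) : AddMonoidAlgebra ℚ (Gr r)))
    (fun q : Gr r × Gr r => q.1 + q.2)]
  rw [image_eq hk hl]
  have hfib : ∀ ρ ∈ (Sset_finite r (Nat.lcm k l) hm).toFinset,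
      (((Sset_finite r k hk).toFinset ×ˢ (Sset_finite r l hl).toFinset).filter
        (fun q => q.1 + q.2 = ρ)).card •
        (AddMonoidAlgebra.single ρ (1:ℚ) : AddMonoidAlgebra ℚ (Gr r)) =
      (Nat.gcd k l ^ r) • (AddMonoidAlgebra.single ρ (1:ℚ) : AddMonoidAlgebra ℚ (Gr r)) := by
    intro ρ hρ
    rw [mem_S (hn := hm)] at hρ
    rw [fiber_card hk hl hρ]
  rw [Finset.sum_congr rfl hfib, ← Finset.smul_sum, ← Nat.cast_smul_eq_nsmul ℚ, smul_smul]
  congr 1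
  have hcast : ((Nat.gcd k l : ℚ)) * (Nat.lcm k l : ℚ) = (k : ℚ) * l := by
    exact_mod_cast congrArg (Nat.cast : ℕ → ℚ) (Nat.gcd_mul_lcm k l)
  have hk0 : (k:ℚ) ≠ 0 := Nat.cast_ne_zero.mpr hk.ne'
  have hl0 : (l:ℚ) ≠ 0 := Nat.cast_ne_zero.mpr hl.ne'
  have hm0 : (Nat.lcm k l : ℚ) ≠ 0 := Nat.cast_ne_zero.mpr hm.ne'
  rw [eq_comm, inv_eq_iff_eq_inv, eq_comm]
  field_simp
  push_cast
  have hpow := congrArg (· ^ r) hcast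
  simp only [mul_pow] at hpow ⊢
  linarith

lemma pair_sum (d : ℕ) (F : ℕ → ℕ → ℚ) (s t : Finset ℕ) :
    (∑ k ∈ s, ∑ l ∈ t.filter (fun l => Nat.lcm k l = d), F k l) =
      ∑ p ∈ (s ×ˢ t).filter (fun p => Nat.lcm p.1 p.2 = d), F p.1 p.2 := by
  classical
  rw [Finset.sum_filter, Finset.sum_product]
  refine Finset.sum_congr rfl fun k _ => ?_
  rw [Finset.sum_filter]

/-- The 0-multiple-cover formula is stable under pointwise products:
if `F(δ) = ∑_{k ∣ δ} f(k) • T_k` and `G(δ) = ∑_{l ∣ δ} g(l) • T_l` then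
`F(δ)·G(δ) = ∑_{d ∣ δ} (∑_{k ∣ d} ∑_{l ∣ d, lcm(k,l) = d} f(k)·g(l)) • T_d`. -/
theorem statement7 (r : ℕ) (hr : 1 ≤ r) (f g : ℕ → ℚ) (δ : ℕ) (hδ : 1 ≤ δ) :
    (∑ k ∈ δ.divisors, f k • Tor r k) * (∑ l ∈ δ.divisors, g l • Tor r l) =
      ∑ d ∈ δ.divisors,
        (∑ k ∈ d.divisors, ∑ l ∈ d.divisors.filter (fun l => Nat.lcm k l = d),
          f k * g l) • Tor r d := by
  classical
  have hδ0 : δ ≠ 0 := by omega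
  rw [Finset.sum_mul_sum]
  have e1 : ∀ k ∈ δ.divisors, ∀ l ∈ δ.divisors,
      (f k • Tor r k) * (g l • Tor r l) = (f k * g l) • Tor r (Nat.lcm k l) := by
    intro k hk l hl
    rw [smul_mul_smul_comm, Tor_mul r k l (Nat.pos_of_mem_divisors hk)
      (Nat.pos_of_mem_divisors hl)]
  rw [Finset.sum_congr rfl fun k hk => Finset.sum_congr rfl fun l hl => e1 k hk l hl,
    ← Finset.sum_product'
      (f := fun k l => (f k * g l) • Tor r (Nat.lcm k l))]
  have hmaps : ∀ p ∈ δ.divisors ×ˢ δ.divisors, Nat.lcm p.1 p.2 ∈ δ.divisors := by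
    rintro ⟨k, l⟩ hp
    rw [Finset.mem_product] at hp
    exact Nat.mem_divisors.mpr ⟨Nat.lcm_dvd (Nat.dvd_of_mem_divisors hp.1)
      (Nat.dvd_of_mem_divisors hp.2), hδ0⟩
  rw [← Finset.sum_fiberwise_of_maps_to hmaps
    (fun p => (f p.1 * g p.2) • Tor r (Nat.lcm p.1 p.2))]
  refine Finset.sum_congr rfl fun d hd => ?_
  have hdδ : d ∣ δ := Nat.dvd_of_mem_divisors hd
  have hd0 : d ≠ 0 := (Nat.pos_of_mem_divisors hd).ne'
  rw [pair_sum, Finset.sum_smul]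
  have hset : (δ.divisors ×ˢ δ.divisors).filter (fun p => Nat.lcm p.1 p.2 = d) =
      (d.divisors ×ˢ d.divisors).filter (fun p => Nat.lcm p.1 p.2 = d) := by
    ext ⟨k, l⟩
    simp only [Finset.mem_filter, Finset.mem_product, Nat.mem_divisors]
    constructor
    · rintro ⟨⟨⟨hk, -⟩, ⟨hl, -⟩⟩, hlcm⟩
      exact ⟨⟨⟨hlcm ▸ Nat.dvd_lcm_left k l, hd0⟩, ⟨hlcm ▸ Nat.dvd_lcm_right k l, hd0⟩⟩, hlcm⟩
    · rintro ⟨⟨⟨hk, -⟩, ⟨hl, -⟩⟩, hlcm⟩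
      exact ⟨⟨⟨hk.trans hdδ, hδ0⟩, ⟨hl.trans hdδ, hδ0⟩⟩, hlcm⟩
  rw [hset]
  refine Finset.sum_congr rfl fun p hp => ?_
  rw [Finset.mem_filter] at hp
  rw [hp.2]

end
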